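/- For every θ with 1/2 < θ < 1, the function h₁(j) = (j+1)θ^{j+2} − jθ^{j+1} − (j−1)θ^{j} + jθ^{j−1} − 1 has exactly one positive real root j₁(θ), and h₁(j) > 0 for all 0 < j < j₁(θ). -/

import Mathlib

open Real

/-- `h₁(j) = (j+1)θ^{j+2} − jθ^{j+1} − (j−1)θ^{j} + jθ^{j−1} − 1`, with real exponents. -/
noncomputable def h1 (θ j : ℝ) : ℝ :=
  (j + 1) * θ ^ (j + 2) - j * θ ^ (j + 1) - (j - 1) * θ ^ j + j * θ ^ (j - 1) - 1

namespace H1Aux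

noncomputable def A (θ : ℝ) : ℝ := θ ^ 3 - θ ^ 2 - θ + 1
noncomputable def B (θ : ℝ) : ℝ := θ ^ 3 + θ
noncomputable def g (θ j : ℝ) : ℝ := (j - 1) * Real.log θ + Real.log (A θ * j + B θ)

lemma A_pos {θ : ℝ} (h0 : 0 < θ) (h1 : θ < 1) : 0 < A θ := by
  have h : 0 < (1 - θ) * (1 - θ) * (θ + 1) :=
    mul_pos (mul_pos (by linarith) (by linarith)) (by linarith)
  unfold A; nlinarith

lemma B_pos {θ : ℝ} (h0 : 0 < θ) : 0 < B θ := by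
  unfold B; nlinarith [pow_pos h0 3]

lemma lin_pos {θ j : ℝ} (h0 : 0 < θ) (h1 : θ < 1) (hj : 0 ≤ j) : 0 < A θ * j + B θ := by
  have := mul_nonneg (A_pos h0 h1).le hj
  linarith [B_pos h0]

lemma h1_eq {θ j : ℝ} (h0 : 0 < θ) (h1' : θ < 1) (hj : 0 ≤ j) :
    h1 θ j = Real.exp (g θ j) - 1 := by
  have key : Real.exp (g θ j) = θ ^ (j - 1) * (A θ * j + B θ) := by
    rw [g, Real.exp_add, Real.exp_log (lin_pos h0 h1' hj), Real.rpow_def_of_pos h0,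
      mul_comm (Real.log θ)]
  have e3 : θ ^ (j + 2) = θ ^ (j - 1) * θ ^ 3 := by
    rw [show j + 2 = (j - 1) + ((3 : ℕ) : ℝ) by push_cast; ring, Real.rpow_add h0,
      Real.rpow_natCast]
  have e2 : θ ^ (j + 1) = θ ^ (j - 1) * θ ^ 2 := by
    rw [show j + 1 = (j - 1) + ((2 : ℕ) : ℝ) by push_cast; ring, Real.rpow_add h0,
      Real.rpow_natCast]
  have e1 : θ ^ j = θ ^ (j - 1) * θ ^ 1 := by
    rw [← Real.rpow_natCast θ 1, ← Real.rpow_add h0]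
    norm_num
  rw [h1, e3, e2, e1, key, A, B]; ring

lemma g0_pos {θ : ℝ} (h0 : 0 < θ) (h1 : θ < 1) :
    0 < -Real.log θ + Real.log (B θ) := by
  have hB : B θ = θ * (θ ^ 2 + 1) := by unfold B; ring
  have h2 : (0:ℝ) < θ ^ 2 + 1 := by positivity
  rw [hB, Real.log_mul h0.ne' h2.ne']
  have := Real.log_pos (by nlinarith : (1:ℝ) < θ ^ 2 + 1)
  linarith

lemma g_zero {θ : ℝ} : g θ 0 = -Real.log θ + Real.log (B θ) := by
  simp [g]

/-- strict concavity argument: if `g θ q = 0` and `0 < t < q` then `0 < g θ t`. -/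
lemma gmid {θ : ℝ} (h0 : 0 < θ) (h1 : θ < 1) {t q : ℝ} (ht : 0 < t) (htq : t < q)
    (hq : g θ q = 0) : 0 < g θ t := by
  have hq0 : 0 < q := ht.trans htq
  have hA := A_pos h0 h1
  have hB := B_pos h0
  set lam := (q - t) / q with hlamdef
  set mu := t / q with hmudef
  have hlam : 0 < lam := div_pos (by linarith) hq0
  have hmu : 0 < mu := div_pos ht hq0
  have hsum : lam + mu = 1 := by
    rw [hlamdef, hmudef, ← add_div]
    field_simp
    ring
  have hmuq : mu * q = t := by
    rw [hmudef]; field_simp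
  have hx : B θ ∈ Set.Ioi (0:ℝ) := hB
  have hy : A θ * q + B θ ∈ Set.Ioi (0:ℝ) := lin_pos h0 h1 hq0.le
  have hne : B θ ≠ A θ * q + B θ := by nlinarith [mul_pos hA hq0]
  have hcc := strictConcaveOn_log_Ioi.2 hx hy hne hlam hmu hsum
  simp only [smul_eq_mul] at hcc
  have harg : lam * B θ + mu * (A θ * q + B θ) = A θ * t + B θ := by
    rw [hlamdef, hmudef]; field_simp; ring
  rw [harg] at hcc
  have hlogq : Real.log (A θ * q + B θ) = -((q - 1) * Real.log θ) := by
    have := hq; simp only [g] at this; linarith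
  have key : lam * Real.log (B θ) + mu * Real.log (A θ * q + B θ) =
      lam * (Real.log (B θ) - Real.log θ) - (t - 1) * Real.log θ := by
    rw [hlogq]
    linear_combination (-Real.log θ) * hmuq + Real.log θ * hsum
  rw [key] at hcc
  have hpos : 0 < lam * (Real.log (B θ) - Real.log θ) :=
    mul_pos hlam (by linarith [g0_pos h0 h1])
  simp only [g]
  linarith

lemma tends {θ : ℝ} (h0 : 0 < θ) (h1 : θ < 1) :
    Filter.Tendsto (fun j => Real.exp (g θ j)) Filter.atTop (nhds 0) := by
  have hc : 0 < -Real.log θ := by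
    have := Real.log_neg h0 h1; linarith
  have T1 : Filter.Tendsto (fun j : ℝ => j ^ (1:ℝ) * Real.exp (-(-Real.log θ) * j))
      Filter.atTop (nhds 0) := tendsto_rpow_mul_exp_neg_mul_atTop_nhds_zero 1 _ hc
  have T0 : Filter.Tendsto (fun j : ℝ => j ^ (0:ℝ) * Real.exp (-(-Real.log θ) * j))
      Filter.atTop (nhds 0) := tendsto_rpow_mul_exp_neg_mul_atTop_nhds_zero 0 _ hc
  have TF : Filter.Tendsto
      (fun j : ℝ => (A θ * (j ^ (1:ℝ) * Real.exp (-(-Real.log θ) * j))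
        + B θ * (j ^ (0:ℝ) * Real.exp (-(-Real.log θ) * j))) * Real.exp (-Real.log θ))
      Filter.atTop (nhds 0) := by
    have := ((T1.const_mul (A θ)).add (T0.const_mul (B θ))).mul_const (Real.exp (-Real.log θ))
    simpa using this
  apply TF.congr'
  filter_upwards [Filter.eventually_ge_atTop (0:ℝ)] with j hj
  have hj1 : j ^ (1:ℝ) = j := Real.rpow_one j
  have hj0 : j ^ (0:ℝ) = 1 := Real.rpow_zero j
  rw [hj1, hj0, g, Real.exp_add, Real.exp_log (lin_pos h0 h1 hj)]
  rw [show (j - 1) * Real.log θ = Real.log θ * j + -Real.log θ by ring, Real.exp_add]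
  ring_nf

end H1Aux

open H1Aux in
/-- For `1/2 < θ < 1`, `h₁` has exactly one positive real root `j₁(θ)`, and
`h₁(j) > 0` for all `0 < j < j₁(θ)`. -/
theorem h1_unique_root (θ : ℝ) (hθ : 1 / 2 < θ) (hθ1 : θ < 1) :
    ∃ j₁ : ℝ, 0 < j₁ ∧ h1 θ j₁ = 0 ∧ (∀ j : ℝ, 0 < j → h1 θ j = 0 → j = j₁) ∧
      ∀ j : ℝ, 0 < j → j < j₁ → 0 < h1 θ j := by
  have h0 : 0 < θ := by linarith
  -- find N with g θ N < 0
  have hev : ∀ᶠ j in Filter.atTop, Real.exp (g θ j) < 1 :=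
    (tends h0 hθ1).eventually_lt_const one_pos
  obtain ⟨N, hN1, hgN⟩ := (Filter.eventually_ge_atTop (1:ℝ)).and hev |>.exists
  have hgN' : g θ N < 0 := Real.exp_lt_one_iff.mp hgN
  have hg0 : 0 < g θ 0 := by rw [g_zero]; exact g0_pos h0 hθ1
  -- IVT on [0, N]
  have hcont : ContinuousOn (g θ) (Set.Icc 0 N) := by
    apply ContinuousOn.add
    · exact ((continuous_id.sub continuous_const).mul continuous_const).continuousOn
    · exact ContinuousOn.log
        ((continuous_const.mul continuous_id).add continuous_const).continuousOn
        (fun x hx => (lin_pos h0 hθ1 hx.1).ne')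
  have hmem : (0:ℝ) ∈ Set.Icc (g θ N) (g θ 0) := ⟨hgN'.le, hg0.le⟩
  obtain ⟨j₁, hj₁mem, hgj₁⟩ := intermediate_value_Icc' (by linarith : (0:ℝ) ≤ N) hcont hmem
  have hj₁pos : 0 < j₁ := by
    rcases hj₁mem.1.lt_or_eq with h | h
    · exact h
    · exfalso; rw [← h] at hgj₁; linarith
  refine ⟨j₁, hj₁pos, ?_, ?_, ?_⟩
  · rw [h1_eq h0 hθ1 hj₁pos.le, hgj₁, Real.exp_zero]; ring
  · intro j hj hroot
    have hgj : g θ j = 0 := by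
      have heq := h1_eq h0 hθ1 hj.le
      rw [hroot] at heq
      have : Real.exp (g θ j) = 1 := by linarith
      exact (Real.exp_eq_one_iff _).mp this
    by_contra hne
    rcases lt_or_gt_of_ne hne with h | h
    · have := gmid h0 hθ1 hj h hgj₁; linarith
    · have := gmid h0 hθ1 hj₁pos h hgj; linarith
  · intro j hj hjlt
    have hgt := gmid h0 hθ1 hj hjlt hgj₁
    rw [h1_eq h0 hθ1 hj.le]
    have := Real.one_lt_exp_iff.mpr hgt
    linarith
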